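/- Let X_n = {x_1, ..., x_n} be nested designs obtained from a point sequence in a compact X ⊂ ℝ^d, and suppose that for some r and n ≥ 2 one has MR(X_n) ≤ r. Then SR(X_{n+1}) ≤ (r/2)·SR(X_n). Consequently, if MR(X_n) ≤ r < 2 for all n ≥ n_0, then SR(X_n) decreases to zero exponentially fast as n → ∞. -/
import Mathlib


open Metric Set MeasureTheory

/-- Distance from a point `x` to the nearest point of the design `D`. -/
noncomputable def minDist {E : Type*} [NormedAddCommGroup E] (D : Finset E) (x : E) : ℝ :=
  sInf ((fun p => dist x p) '' (D : Set E))

/-- Fill distance (covering radius) of the design `D` for the set `A`: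
`CR_A(D) = sup_{x ∈ A} min_{p ∈ D} ‖x - p‖`. -/
noncomputable def fillDist {E : Type*} [NormedAddCommGroup E] (A : Set E) (D : Finset E) : ℝ :=
  sSup ((fun x => minDist D x) '' A)

/-- Separation radius of the design `D`:
`SR(D) = (1/2) min_{p ≠ q ∈ D} ‖p - q‖`. -/
noncomputable def sepRad {E : Type*} [NormedAddCommGroup E] (D : Finset E) : ℝ :=
  (1 / 2) * sInf ((fun p : E × E => dist p.1 p.2) '' {p | p.1 ∈ D ∧ p.2 ∈ D ∧ p.1 ≠ p.2})

/-- Mesh-ratio of the design `D` for the set `A`: `MR(D) = CR_A(D) / SR(D)`. -/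
noncomputable def meshRatio {E : Type*} [NormedAddCommGroup E] (A : Set E) (D : Finset E) : ℝ :=
  fillDist A D / sepRad D

/-- The nested design consisting of the first `n` points of the sequence `x`. -/
noncomputable def design {E : Type*} (x : ℕ → E) (n : ℕ) : Finset E :=
  letI := Classical.decEq E
  (Finset.range n).image x

section Aux

variable {E : Type*} [NormedAddCommGroup E]

lemma mem_design {x : ℕ → E} {n k : ℕ} (hk : k < n) : x k ∈ design x n := by
  classical
  simp only [design]
  exact Finset.mem_image.mpr ⟨k, Finset.mem_range.mpr hk, rfl⟩

lemma mem_design_iff {x : ℕ → E} (hinj : Function.Injective x) {n k : ℕ} :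
    x k ∈ design x n ↔ k < n := by
  classical
  constructor
  · intro h
    simp only [design] at h
    obtain ⟨j, hj, hje⟩ := Finset.mem_image.mp h
    rwa [← hinj hje, ← Finset.mem_range]
  · exact mem_design

/-- The pair-distance set of a design is finite. -/
lemma pairSet_finite (D : Finset E) :
    ((fun p : E × E => dist p.1 p.2) '' {p | p.1 ∈ D ∧ p.2 ∈ D ∧ p.1 ≠ p.2}).Finite := by
  apply Set.Finite.subset (Set.Finite.image (fun p : E × E => dist p.1 p.2)
    ((D.finite_toSet).prod (D.finite_toSet)))
  rintro _ ⟨p, ⟨h1, h2, _⟩, rfl⟩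
  exact ⟨p, ⟨h1, h2⟩, rfl⟩

lemma pairSet_nonneg (D : Finset E) :
    ∀ y ∈ (fun p : E × E => dist p.1 p.2) '' {p | p.1 ∈ D ∧ p.2 ∈ D ∧ p.1 ≠ p.2}, 0 ≤ y := by
  rintro _ ⟨p, _, rfl⟩; exact dist_nonneg

lemma sepRad_pos {D : Finset E} (h : ∃ p ∈ (D : Set E), ∃ q ∈ (D : Set E), p ≠ q) :
    0 < sepRad D := by
  unfold sepRad
  have hne : ((fun p : E × E => dist p.1 p.2) ''
      {p | p.1 ∈ D ∧ p.2 ∈ D ∧ p.1 ≠ p.2}).Nonempty := by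
    obtain ⟨p, hp, q, hq, hpq⟩ := h
    exact ⟨_, ⟨(p, q), ⟨hp, hq, hpq⟩, rfl⟩⟩
  have hmem := hne.csInf_mem (pairSet_finite D)
  obtain ⟨p, ⟨_, _, hpq⟩, heq⟩ := hmem
  have h2 : 0 < sInf ((fun p : E × E => dist p.1 p.2) ''
      {p | p.1 ∈ D ∧ p.2 ∈ D ∧ p.1 ≠ p.2}) := by
    rw [← heq]; exact dist_pos.mpr hpq
  linarith

lemma minDist_pos_of_notMem {D : Finset E} {z : E} (hz : z ∉ D) (hD : D.Nonempty) :
    0 < minDist D z := by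
  unfold minDist
  have hne : ((fun p => dist z p) '' (D : Set E)).Nonempty := by
    obtain ⟨p, hp⟩ := hD
    exact ⟨_, ⟨p, hp, rfl⟩⟩
  have hfin : ((fun p => dist z p) '' (D : Set E)).Finite :=
    (D.finite_toSet).image _
  obtain ⟨p, hp, heq⟩ := hne.csInf_mem hfin
  rw [← heq]
  exact dist_pos.mpr (fun h => hz (h ▸ hp))

lemma minDist_le {D : Finset E} {z p : E} (hp : p ∈ D) : minDist D z ≤ dist z p := by
  unfold minDist
  exact csInf_le ⟨0, by rintro _ ⟨q, _, rfl⟩; exact dist_nonneg⟩ ⟨p, hp, rfl⟩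

/-- Over a compact set and with a design point in `S`, the minDist function is bounded. -/
lemma bddAbove_minDist {S : Set E} (hS : IsCompact S) {D : Finset E} {p₀ : E}
    (hp₀ : p₀ ∈ D) (hp₀S : p₀ ∈ S) :
    BddAbove ((fun z => minDist D z) '' S) := by
  obtain ⟨C, hC⟩ := Metric.isBounded_iff.mp hS.isBounded
  refine ⟨C, ?_⟩
  rintro _ ⟨z, hz, rfl⟩
  exact le_trans (minDist_le hp₀) (hC hz hp₀S)

lemma minDist_le_fillDist {S : Set E} (hS : IsCompact S) {D : Finset E} {p₀ : E}
    (hp₀ : p₀ ∈ D) (hp₀S : p₀ ∈ S) {z : E} (hz : z ∈ S) :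
    minDist D z ≤ fillDist S D :=
  le_csSup (bddAbove_minDist hS hp₀ hp₀S) ⟨z, hz, rfl⟩

/-- Key geometric step: the new point `x n` gives a pair in `design x (n+1)`. -/
lemma sepRad_succ_le {x : ℕ → E} (hinj : Function.Injective x) {n : ℕ} (hn : 1 ≤ n) :
    sepRad (design x (n + 1)) ≤ (1 / 2) * minDist (design x n) (x n) := by
  unfold sepRad minDist
  have hsub : (fun p => dist (x n) p) '' ((design x n : Set E)) ⊆
      (fun p : E × E => dist p.1 p.2) ''
        {p | p.1 ∈ design x (n + 1) ∧ p.2 ∈ design x (n + 1) ∧ p.1 ≠ p.2} := by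
    rintro _ ⟨p, hp, rfl⟩
    refine ⟨(x n, p), ⟨mem_design (Nat.lt_succ_self n), ?_, ?_⟩, rfl⟩
    · classical
      simp only [design] at hp ⊢
      obtain ⟨j, hj, rfl⟩ := Finset.mem_image.mp hp
      exact Finset.mem_image.mpr ⟨j, Finset.mem_range.mpr (Nat.lt_succ_of_lt (Finset.mem_range.mp hj)), rfl⟩
    · classical
      simp only [design] at hp
      obtain ⟨j, hj, rfl⟩ := Finset.mem_image.mp hp
      intro h
      have hj' := Finset.mem_range.mp hj
      have := hinj h
      omega
  have hneD : ((fun p => dist (x n) p) '' ((design x n : Set E))).Nonempty :=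
    ⟨_, ⟨x 0, mem_design (by omega), rfl⟩⟩
  have hle := csInf_le_csInf
    ⟨0, pairSet_nonneg (design x (n + 1))⟩ hneD hsub
  linarith

end Aux

/-- Let `Xₙ` be the nested designs of a point sequence in a compact
`S ⊆ ℝ^d`. If `MR(Xₙ) ≤ r` for some `n ≥ 2`, then `SR(X_{n+1}) ≤ (r/2)·SR(Xₙ)`.
Consequently, if `MR(Xₙ) ≤ r < 2` for all `n ≥ n₀`, then `SR(Xₙ)` decreases to zero
exponentially fast: `SR(Xₙ) ≤ C·(r/2)^n` for some constant `C > 0`. -/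
theorem statement18 {d : ℕ} (hd : 1 ≤ d)
    {E : Type*} [NormedAddCommGroup E] [NormedSpace ℝ E] [FiniteDimensional ℝ E]
    (hdim : Module.finrank ℝ E = d)
    (S : Set E) (hS : IsCompact S)
    (x : ℕ → E) (hinj : Function.Injective x) (hmem : ∀ k, x k ∈ S) :
    (∀ r : ℝ, ∀ n : ℕ, 2 ≤ n → meshRatio S (design x n) ≤ r →
      sepRad (design x (n + 1)) ≤ (r / 2) * sepRad (design x n)) ∧
    (∀ r : ℝ, r < 2 → ∀ n₀ : ℕ, 2 ≤ n₀ →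
      (∀ n : ℕ, n₀ ≤ n → meshRatio S (design x n) ≤ r) →
      ∃ C : ℝ, 0 < C ∧ ∀ n : ℕ, n₀ ≤ n → sepRad (design x n) ≤ C * (r / 2) ^ n) := by
  -- common facts
  have hsep_pos : ∀ n : ℕ, 2 ≤ n → 0 < sepRad (design x n) := by
    intro n hn
    refine sepRad_pos ⟨x 0, mem_design (by omega), x 1, mem_design (by omega), ?_⟩
    intro h; exact absurd (hinj h) (by omega)
  have hfill_pos : ∀ n : ℕ, 1 ≤ n → 0 < fillDist S (design x n) := by
    intro n hn
    have h1 : 0 < minDist (design x n) (x n) := by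
      refine minDist_pos_of_notMem ?_ ⟨x 0, mem_design (by omega)⟩
      rw [mem_design_iff hinj]; omega
    exact lt_of_lt_of_le h1
      (minDist_le_fillDist hS (mem_design (show 0 < n by omega)) (hmem 0) (hmem n))
  have key : ∀ r : ℝ, ∀ n : ℕ, 2 ≤ n → meshRatio S (design x n) ≤ r →
      sepRad (design x (n + 1)) ≤ (r / 2) * sepRad (design x n) := by
    intro r n hn hr
    have hsp := hsep_pos n hn
    have hfill_le : fillDist S (design x n) ≤ r * sepRad (design x n) := by
      rw [meshRatio, div_le_iff₀ hsp] at hr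
      exact hr
    have h1 : sepRad (design x (n + 1)) ≤ (1 / 2) * minDist (design x n) (x n) :=
      sepRad_succ_le hinj (by omega)
    have h2 : minDist (design x n) (x n) ≤ fillDist S (design x n) :=
      minDist_le_fillDist hS (mem_design (show 0 < n by omega)) (hmem 0) (hmem n)
    calc sepRad (design x (n + 1)) ≤ (1 / 2) * minDist (design x n) (x n) := h1
      _ ≤ (1 / 2) * fillDist S (design x n) := by linarith
      _ ≤ (1 / 2) * (r * sepRad (design x n)) := by linarith
      _ = (r / 2) * sepRad (design x n) := by ring
  refine ⟨key, ?_⟩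
  intro r hr2 n₀ hn₀ hall
  have hr_pos : 0 < r := by
    have hm := hall n₀ le_rfl
    have : 0 < meshRatio S (design x n₀) :=
      div_pos (hfill_pos n₀ (by omega)) (hsep_pos n₀ hn₀)
    linarith
  have hq_pos : 0 < r / 2 := by linarith
  refine ⟨sepRad (design x n₀) / (r / 2) ^ n₀, div_pos (hsep_pos n₀ hn₀) (pow_pos hq_pos n₀), ?_⟩
  intro n hn
  induction n, hn using Nat.le_induction with
  | base =>
    rw [div_mul_cancel₀ _ (ne_of_gt (pow_pos hq_pos n₀))]
  | succ n hn ih =>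
    have hstep := key r n (by omega) (hall n hn)
    calc sepRad (design x (n + 1)) ≤ (r / 2) * sepRad (design x n) := hstep
      _ ≤ (r / 2) * (sepRad (design x n₀) / (r / 2) ^ n₀ * (r / 2) ^ n) := by
          exact mul_le_mul_of_nonneg_left ih (le_of_lt hq_pos)
      _ = sepRad (design x n₀) / (r / 2) ^ n₀ * (r / 2) ^ (n + 1) := by ring
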